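/- For any finite sets A, B of points in R^d with |A| = n_1 ≥ 1, |B| = n_2 ≥ 1 and α = 1, the two-sample energy statistic (2/(n_1 n_2))∑_{a∈A}∑_{b∈B}|a-b| - (1/n_1^2)∑_{a,a'∈A}|a-a'| - (1/n_2^2)∑_{b,b'∈B}|b-b'| is nonnegative. -/

import Mathlib

open Finset Nat MeasureTheory Set

lemma inner_pow_psd {ι : Type*} [Fintype ι] {d : ℕ} (c : ι → ℝ)
    (x : ι → EuclideanSpace ℝ (Fin d)) (m : ℕ) :
    0 ≤ ∑ k, ∑ l, c k * c l * (inner ℝ (x k) (x l) : ℝ) ^ m := by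
  have hinner : ∀ k l : ι, (inner ℝ (x k) (x l) : ℝ) = ∑ r, x k r * x l r := by
    intro k l
    rw [PiLp.inner_apply]
    simp [RCLike.inner_apply, mul_comm]
  have key : ∀ k l : ι, (inner ℝ (x k) (x l) : ℝ) ^ m
      = ∑ p ∈ Fintype.piFinset (fun _ : Fin m => (univ : Finset (Fin d))),
          (∏ i, x k (p i)) * (∏ i, x l (p i)) := by
    intro k l
    rw [hinner, Finset.sum_pow']
    exact Finset.sum_congr rfl fun p _ => by rw [Finset.prod_mul_distrib]
  calc (0:ℝ) ≤ ∑ p ∈ Fintype.piFinset (fun _ : Fin m => (univ : Finset (Fin d))),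
        (∑ k, c k * ∏ i, x k (p i)) ^ 2 :=
        Finset.sum_nonneg fun p _ => sq_nonneg _
    _ = ∑ k, ∑ l, c k * c l * (inner ℝ (x k) (x l) : ℝ) ^ m := by
        simp_rw [key, Finset.mul_sum, sq, Finset.sum_mul, Finset.mul_sum]
        rw [Finset.sum_comm]
        refine Finset.sum_congr rfl fun k _ => ?_
        rw [Finset.sum_comm]
        refine Finset.sum_congr rfl fun l _ => Finset.sum_congr rfl fun p _ => by ring

lemma gauss_psd {ι : Type*} [Fintype ι] {d : ℕ} (c : ι → ℝ)
    (x : ι → EuclideanSpace ℝ (Fin d)) {t : ℝ} (ht : 0 ≤ t) :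
    0 ≤ ∑ k, ∑ l, c k * c l * Real.exp (-(t * ‖x k - x l‖ ^ 2)) := by
  set e : ι → ℝ := fun k => c k * Real.exp (-(t * ‖x k‖ ^ 2)) with he
  have hsplit : ∀ k l : ι, c k * c l * Real.exp (-(t * ‖x k - x l‖ ^ 2))
      = e k * e l * Real.exp (2 * t * (inner ℝ (x k) (x l) : ℝ)) := by
    intro k l
    have hn : ‖x k - x l‖ ^ 2 = ‖x k‖ ^ 2 - 2 * (inner ℝ (x k) (x l) : ℝ) + ‖x l‖ ^ 2 :=
      norm_sub_sq_real (x k) (x l)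
    have harg : -(t * ‖x k - x l‖ ^ 2)
        = -(t * ‖x k‖ ^ 2) + -(t * ‖x l‖ ^ 2) + 2 * t * (inner ℝ (x k) (x l) : ℝ) := by
      rw [hn]; ring
    rw [he, harg, Real.exp_add, Real.exp_add]
    ring
  simp_rw [hsplit]
  have hexp : ∀ k l : ι, Real.exp (2 * t * (inner ℝ (x k) (x l) : ℝ))
      = ∑' m : ℕ, (2 * t * (inner ℝ (x k) (x l) : ℝ)) ^ m / (m ! : ℝ) := by
    intro k l
    rw [Real.exp_eq_exp_ℝ, NormedSpace.exp_eq_tsum_div]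
  simp_rw [hexp]
  have hsummable : ∀ k l : ι, Summable (fun m : ℕ =>
      e k * e l * ((2 * t * (inner ℝ (x k) (x l) : ℝ)) ^ m / (m ! : ℝ))) := fun k l =>
    (Real.summable_pow_div_factorial _).mul_left _
  have hswap : ∑ k, ∑ l, e k * e l * ∑' m : ℕ, (2 * t * (inner ℝ (x k) (x l) : ℝ)) ^ m / (m ! : ℝ)
      = ∑' m : ℕ, ∑ k, ∑ l, e k * e l * ((2 * t * (inner ℝ (x k) (x l) : ℝ)) ^ m / (m ! : ℝ)) := by
    rw [Summable.tsum_finsetSum (fun k _ => summable_sum fun l _ => hsummable k l)]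
    refine Finset.sum_congr rfl fun k _ => ?_
    rw [Summable.tsum_finsetSum (fun l _ => hsummable k l)]
    exact Finset.sum_congr rfl fun l _ => (tsum_mul_left).symm
  rw [hswap]
  refine tsum_nonneg fun m => ?_
  have hterm : ∀ k l : ι, e k * e l * ((2 * t * (inner ℝ (x k) (x l) : ℝ)) ^ m / (m ! : ℝ))
      = ((2 * t) ^ m / (m ! : ℝ)) * (e k * e l * (inner ℝ (x k) (x l) : ℝ) ^ m) := by
    intro k l; rw [mul_pow]; ring
  simp_rw [hterm, ← Finset.mul_sum]
  exact mul_nonneg (div_nonneg (pow_nonneg (by linarith) m) (by positivity)) (inner_pow_psd e x m)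

noncomputable def negExpInt (a : ℝ) : ℝ :=
  ∫ t in Set.Ioi (0:ℝ), (1 - Real.exp (-(a * t))) * t ^ (-(3/2) : ℝ)

lemma energy_integrand_integrableOn {a : ℝ} (ha : 0 ≤ a) :
    IntegrableOn (fun t : ℝ => (1 - Real.exp (-(a * t))) * t ^ (-(3/2) : ℝ))
      (Set.Ioi (0:ℝ)) := by
  set f : ℝ → ℝ := fun t => (1 - Real.exp (-(a * t))) * t ^ (-(3/2) : ℝ) with hf
  have hmeas : Measurable f := by
    apply Measurable.mul
    · exact (measurable_const.sub ((measurable_const.mul measurable_id).neg.exp))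
    · measurability
  have h01 : IntegrableOn f (Set.Ioc (0:ℝ) 1) := by
    have hg : IntegrableOn (fun t : ℝ => a * t ^ (-(1/2) : ℝ)) (Set.Ioc (0:ℝ) 1) := by
      have := (intervalIntegral.intervalIntegrable_rpow' (a := 0) (b := 1)
        (r := (-(1/2):ℝ)) (by norm_num))
      rw [intervalIntegrable_iff_integrableOn_Ioc_of_le zero_le_one] at this
      exact this.const_mul a
    refine Integrable.mono hg hmeas.aestronglyMeasurable ?_
    filter_upwards [ae_restrict_mem measurableSet_Ioc] with t ht
    obtain ⟨ht0, ht1⟩ := ht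
    have hat : 0 ≤ a * t := mul_nonneg ha ht0.le
    have h1 : 0 ≤ 1 - Real.exp (-(a * t)) := by
      have := Real.exp_le_one_iff.mpr (neg_nonpos.mpr hat)
      linarith
    have h2 : 1 - Real.exp (-(a * t)) ≤ a * t := by
      have := Real.add_one_le_exp (-(a * t))
      nlinarith [Real.exp_pos (-(a*t))]
    have hr : (0:ℝ) ≤ t ^ (-(3/2) : ℝ) := Real.rpow_nonneg ht0.le _
    rw [Real.norm_eq_abs, Real.norm_eq_abs, abs_of_nonneg (mul_nonneg h1 hr),
      abs_of_nonneg (by positivity)]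
    calc (1 - Real.exp (-(a * t))) * t ^ (-(3/2) : ℝ)
        ≤ (a * t) * t ^ (-(3/2) : ℝ) := by
          exact mul_le_mul_of_nonneg_right h2 hr
      _ = a * (t * t ^ (-(3/2) : ℝ)) := by ring
      _ = a * t ^ (-(1/2) : ℝ) := by
          congr 1
          rw [show (-(1/2) : ℝ) = 1 + -(3/2) by norm_num, Real.rpow_add ht0, Real.rpow_one]
  have h1i : IntegrableOn f (Set.Ioi (1:ℝ)) := by
    have hg : IntegrableOn (fun t : ℝ => t ^ (-(3/2) : ℝ)) (Set.Ioi (1:ℝ)) :=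
      integrableOn_Ioi_rpow_of_lt (by norm_num) one_pos
    refine Integrable.mono hg hmeas.aestronglyMeasurable ?_
    filter_upwards [ae_restrict_mem measurableSet_Ioi] with t ht
    have ht0 : (0:ℝ) < t := lt_trans one_pos ht
    have hat : 0 ≤ a * t := mul_nonneg ha ht0.le
    have h1 : 0 ≤ 1 - Real.exp (-(a * t)) := by
      have := Real.exp_le_one_iff.mpr (neg_nonpos.mpr hat)
      linarith
    have h2 : 1 - Real.exp (-(a * t)) ≤ 1 := by
      have := Real.exp_pos (-(a * t)); linarith
    have hr : (0:ℝ) ≤ t ^ (-(3/2) : ℝ) := Real.rpow_nonneg ht0.le _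
    rw [Real.norm_eq_abs, Real.norm_eq_abs, abs_of_nonneg (mul_nonneg h1 hr),
      abs_of_nonneg hr]
    nlinarith
  have : Set.Ioi (0:ℝ) = Set.Ioc (0:ℝ) 1 ∪ Set.Ioi (1:ℝ) :=
    (Set.Ioc_union_Ioi_eq_Ioi zero_le_one).symm
  rw [this]
  exact h01.union h1i

lemma negExpInt_scale {s : ℝ} (hs : 0 ≤ s) : negExpInt (s ^ 2) = negExpInt 1 * s := by
  rcases eq_or_lt_of_le hs with h | h
  · subst h
    simp [negExpInt]
  · have hb : (0:ℝ) < s ^ 2 := by positivity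
    have key := integral_comp_mul_left_Ioi
      (g := fun u : ℝ => (1 - Real.exp (-u)) * u ^ (-(3/2) : ℝ)) 0 hb
    rw [mul_zero] at key
    have hL : ∀ t ∈ Set.Ioi (0:ℝ),
        (1 - Real.exp (-(s ^ 2 * t))) * (s ^ 2 * t) ^ (-(3/2) : ℝ)
        = (s ^ 2) ^ (-(3/2) : ℝ) * ((1 - Real.exp (-(s ^ 2 * t))) * t ^ (-(3/2) : ℝ)) := by
      intro t ht
      rw [Real.mul_rpow hb.le (le_of_lt ht)]
      ring
    rw [setIntegral_congr_fun measurableSet_Ioi hL, MeasureTheory.integral_const_mul] at key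
    rw [smul_eq_mul] at key
    have hpow : ((s ^ 2 : ℝ)) ^ (-(3/2) : ℝ) ≠ 0 := by positivity
    have hC : (∫ x in Set.Ioi (0:ℝ), (fun u => (1 - Real.exp (-u)) * u ^ (-(3/2):ℝ)) x)
        = negExpInt 1 := by
      simp only [negExpInt, one_mul]
    rw [hC] at key
    have : negExpInt (s ^ 2) = ((s ^ 2) ^ (-(3/2) : ℝ))⁻¹ * ((s ^ 2)⁻¹ * negExpInt 1) := by
      rw [negExpInt, ← key]
      field_simp
    have e1 : ((s ^ 2 : ℝ)) ^ (-(3/2) : ℝ) = s ^ (-(3:ℝ)) := by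
      rw [← Real.rpow_natCast s 2, ← Real.rpow_mul hs]
      norm_num
    have e2 : ((s ^ 2 : ℝ))⁻¹ = s ^ (-(2:ℝ)) := by
      rw [← Real.rpow_natCast s 2, ← Real.rpow_neg hs]
      norm_num
    rw [this, e1, e2, Real.rpow_neg hs 3, inv_inv, ← mul_assoc, ← Real.rpow_add h]
    norm_num
    ring

lemma negExpInt_one_pos : 0 < negExpInt 1 := by
  rw [negExpInt, setIntegral_pos_iff_support_of_nonneg_ae]
  · refine lt_of_lt_of_le ?_ (measure_mono ?_ :
      volume (Set.Ioi (0:ℝ)) ≤ volume (Function.support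
        (fun t : ℝ => (1 - Real.exp (-(1 * t))) * t ^ (-(3/2) : ℝ)) ∩ Set.Ioi 0))
    · rw [Real.volume_Ioi]; exact ENNReal.zero_lt_top
    · intro t ht
      refine ⟨?_, ht⟩
      have ht0 : (0:ℝ) < t := ht
      have h1 : Real.exp (-(1 * t)) < 1 := Real.exp_lt_one_iff.mpr (by linarith)
      have h2 : (0:ℝ) < t ^ (-(3/2) : ℝ) := Real.rpow_pos_of_pos ht0 _
      exact ne_of_gt (by nlinarith)
  · filter_upwards [ae_restrict_mem measurableSet_Ioi] with t ht
    have ht0 : (0:ℝ) < t := ht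
    have h1 : Real.exp (-(1 * t)) ≤ 1 := Real.exp_le_one_iff.mpr (by linarith)
    have h2 : (0:ℝ) ≤ t ^ (-(3/2) : ℝ) := Real.rpow_nonneg ht0.le _
    exact mul_nonneg (by linarith) h2
  · exact energy_integrand_integrableOn zero_le_one

lemma euclidean_cnd {ι : Type*} [Fintype ι] {d : ℕ} (c : ι → ℝ) (hc : ∑ k, c k = 0)
    (x : ι → EuclideanSpace ℝ (Fin d)) :
    ∑ k, ∑ l, c k * c l * ‖x k - x l‖ ≤ 0 := by
  have key : ∑ k, ∑ l, c k * c l * ‖x k - x l‖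
      = (negExpInt 1)⁻¹ * ∑ k, ∑ l, c k * c l * negExpInt (‖x k - x l‖ ^ 2) := by
    rw [Finset.mul_sum]
    refine Finset.sum_congr rfl fun k _ => ?_
    rw [Finset.mul_sum]
    refine Finset.sum_congr rfl fun l _ => ?_
    rw [negExpInt_scale (norm_nonneg _)]
    rw [show (negExpInt 1)⁻¹ * (c k * c l * (negExpInt 1 * ‖x k - x l‖))
      = ((negExpInt 1)⁻¹ * negExpInt 1) * (c k * c l * ‖x k - x l‖) by ring,
      inv_mul_cancel₀ negExpInt_one_pos.ne', one_mul]
  rw [key]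
  have hint : ∀ k l : ι, c k * c l * negExpInt (‖x k - x l‖ ^ 2)
      = ∫ t in Set.Ioi (0:ℝ),
          c k * c l * ((1 - Real.exp (-(‖x k - x l‖ ^ 2 * t))) * t ^ (-(3/2) : ℝ)) := by
    intro k l
    rw [negExpInt, MeasureTheory.integral_const_mul]
  simp_rw [hint]
  have hswap : ∑ k, ∑ l, (∫ t in Set.Ioi (0:ℝ),
        c k * c l * ((1 - Real.exp (-(‖x k - x l‖ ^ 2 * t))) * t ^ (-(3/2) : ℝ)))
      = ∫ t in Set.Ioi (0:ℝ), ∑ k, ∑ l,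
          c k * c l * ((1 - Real.exp (-(‖x k - x l‖ ^ 2 * t))) * t ^ (-(3/2) : ℝ)) := by
    rw [MeasureTheory.integral_finset_sum]
    · exact Finset.sum_congr rfl fun k _ => (MeasureTheory.integral_finset_sum _
        fun l _ => ((energy_integrand_integrableOn (by positivity)).const_mul _)).symm
    · exact fun k _ => integrable_finset_sum _
        fun l _ => ((energy_integrand_integrableOn (by positivity)).const_mul _)
  rw [hswap]
  have hptw : ∀ᵐ t ∂(volume.restrict (Set.Ioi (0:ℝ))), (∑ k, ∑ l,
      c k * c l * ((1 - Real.exp (-(‖x k - x l‖ ^ 2 * t))) * t ^ (-(3/2) : ℝ))) ≤ 0 := by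
    filter_upwards [ae_restrict_mem measurableSet_Ioi] with t ht
    have ht0 : (0:ℝ) < t := ht
    have hG : 0 ≤ ∑ k, ∑ l, c k * c l * Real.exp (-(t * ‖x k - x l‖ ^ 2)) :=
      gauss_psd c x ht0.le
    have hr : (0:ℝ) ≤ t ^ (-(3/2) : ℝ) := Real.rpow_nonneg ht0.le _
    have hterm : ∀ k l : ι,
        c k * c l * ((1 - Real.exp (-(‖x k - x l‖ ^ 2 * t))) * t ^ (-(3/2) : ℝ))
        = (c k * c l - c k * c l * Real.exp (-(t * ‖x k - x l‖ ^ 2))) * t ^ (-(3/2) : ℝ) := by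
      intro k l; rw [mul_comm (‖x k - x l‖ ^ 2) t]; ring
    simp_rw [hterm, ← Finset.sum_mul]
    have hzero : ∑ k, ∑ l, (c k * c l - c k * c l * Real.exp (-(t * ‖x k - x l‖ ^ 2)))
        = -∑ k, ∑ l, c k * c l * Real.exp (-(t * ‖x k - x l‖ ^ 2)) := by
      simp_rw [Finset.sum_sub_distrib, ← Finset.mul_sum, ← Finset.sum_mul, hc]
      ring
    rw [hzero]
    exact mul_nonpos_of_nonpos_of_nonneg (by linarith) hr
  have hle : (∫ t in Set.Ioi (0:ℝ), ∑ k, ∑ l,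
      c k * c l * ((1 - Real.exp (-(‖x k - x l‖ ^ 2 * t))) * t ^ (-(3/2) : ℝ))) ≤ 0 :=
    integral_nonpos_of_ae hptw
  exact mul_nonpos_of_nonneg_of_nonpos (inv_nonneg.mpr negExpInt_one_pos.le) hle

/-- Sample version of nonnegativity of the energy distance with `α = 1`: for
finite samples `a : Fin n₁ → ℝᵈ`, `b : Fin n₂ → ℝᵈ`,
`(2/(n₁n₂))∑∑‖aᵢ-bⱼ‖ - (1/n₁²)∑∑‖aᵢ-aⱼ‖ - (1/n₂²)∑∑‖bᵢ-bⱼ‖ ≥ 0`. -/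
theorem sample_energy_statistic_nonneg
    (d n₁ n₂ : ℕ) (hn₁ : 1 ≤ n₁) (hn₂ : 1 ≤ n₂)
    (a : Fin n₁ → EuclideanSpace ℝ (Fin d)) (b : Fin n₂ → EuclideanSpace ℝ (Fin d)) :
    0 ≤ (2 / ((n₁ : ℝ) * n₂)) * ∑ i, ∑ j, ‖a i - b j‖
        - (1 / (n₁ : ℝ) ^ 2) * ∑ i, ∑ j, ‖a i - a j‖
        - (1 / (n₂ : ℝ) ^ 2) * ∑ i, ∑ j, ‖b i - b j‖ := by
  have hn₁' : (0:ℝ) < n₁ := by exact_mod_cast hn₁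
  have hn₂' : (0:ℝ) < n₂ := by exact_mod_cast hn₂
  set c : Fin n₁ ⊕ Fin n₂ → ℝ := Sum.elim (fun _ => 1 / (n₁:ℝ)) (fun _ => -(1 / (n₂:ℝ)))
    with hcdef
  set x : Fin n₁ ⊕ Fin n₂ → EuclideanSpace ℝ (Fin d) := Sum.elim a b with hxdef
  have hc : ∑ k, c k = 0 := by
    rw [hcdef, Fintype.sum_sum_type]
    simp only [Sum.elim_inl, Sum.elim_inr, Finset.sum_const, Finset.card_univ, Fintype.card_fin,
      nsmul_eq_mul]
    field_simp
    norm_num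
  have h := euclidean_cnd c hc x
  rw [Fintype.sum_sum_type] at h
  have hich : ∀ k : Fin n₁ ⊕ Fin n₂, ∑ l, c k * c l * ‖x k - x l‖
      = ∑ i, c k * c (Sum.inl i) * ‖x k - x (Sum.inl i)‖
        + ∑ j, c k * c (Sum.inr j) * ‖x k - x (Sum.inr j)‖ := fun k =>
    Fintype.sum_sum_type _
  simp_rw [hich] at h
  rw [Finset.sum_add_distrib, Finset.sum_add_distrib] at h
  simp only [hcdef, hxdef, Sum.elim_inl, Sum.elim_inr] at h
  have hBA : ∑ j : Fin n₂, ∑ i : Fin n₁, ‖b j - a i‖ = ∑ i : Fin n₁, ∑ j : Fin n₂, ‖a i - b j‖ := by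
    rw [Finset.sum_comm]
    exact Finset.sum_congr rfl fun i _ => Finset.sum_congr rfl fun j _ => norm_sub_rev _ _
  simp_rw [← Finset.mul_sum] at h
  rw [hBA] at h
  have e1 : 1/(n₁:ℝ) * (1/(n₁:ℝ)) = 1/(n₁:ℝ)^2 := by ring
  have e2 : 1/(n₁:ℝ) * -(1/(n₂:ℝ)) = -(1/((n₁:ℝ)*(n₂:ℝ))) := by ring
  have e3 : -(1/(n₂:ℝ)) * (1/(n₁:ℝ)) = -(1/((n₁:ℝ)*(n₂:ℝ))) := by ring
  have e4 : -(1/(n₂:ℝ)) * -(1/(n₂:ℝ)) = 1/(n₂:ℝ)^2 := by ring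
  have e5 : 2/((n₁:ℝ)*n₂) = 1/((n₁:ℝ)*n₂) + 1/((n₁:ℝ)*n₂) := by ring
  rw [e1, e2, e3, e4] at h
  rw [e5]
  linarith
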